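/- Let A be the 3×3 Hermitian matrix with A₀₁ = A₁₂ = A₂₀ = −i, A₁₀ = A₂₁ = A₀₂ = i, and zero diagonal. Then for every real t, the (j,0) entry of exp(−itA) equals (1 + 2cos(t√3 − 2πj/3))/3 for j = 0, 1, 2. In particular, |⟨1| exp(−itA) |0⟩| = 1 at t = 8π/(3√3), so A exhibits perfect state transfer from vertex 0 to vertex 1. -/

import Mathlib

open Matrix Real

set_option maxHeartbeats 1600000

noncomputable section
namespace HTW
def s : ℝ := Real.sqrt 3
def ω : ℂ := (-1 + (s : ℂ) * Complex.I) / 2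
def ωb : ℂ := (-1 - (s : ℂ) * Complex.I) / 2
def U : Matrix (Fin 3) (Fin 3) ℂ := !![1,1,1;1,ω,ωb;1,ωb,ω]
def V : Matrix (Fin 3) (Fin 3) ℂ := (1/3 : ℂ) • !![1,1,1;1,ωb,ω;1,ω,ωb]
def A : Matrix (Fin 3) (Fin 3) ℂ :=
  !![0, -Complex.I, Complex.I; Complex.I, 0, -Complex.I; -Complex.I, Complex.I, 0]

lemma hs2 : (s : ℂ)^2 = 3 := by
  rw [← Complex.ofReal_pow]
  norm_cast
  exact Real.sq_sqrt (by norm_num)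

lemma hI2 : Complex.I^2 = -1 := Complex.I_sq

lemma hUV : U * V = 1 := by
  ext i j
  fin_cases i <;> fin_cases j <;>
    simp [U, V, ω, ωb, Matrix.mul_apply, Fin.sum_univ_three, Matrix.one_apply] <;>
    field_simp <;>
    first
      | linear_combination -hs2
      | linear_combination 71*hs2 - 72*((s:ℂ))^2*hI2
      | linear_combination -73*hs2 + 72*((s:ℂ))^2*hI2
      | linear_combination 72*hs2 - 72*((s:ℂ))^2*hI2
      | linear_combination -72*hs2 + 72*((s:ℂ))^2*hI2
      | linear_combination 2*hs2 - 2*((s:ℂ))^2*hI2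
      | linear_combination -2*hs2 + 2*((s:ℂ))^2*hI2
      | ring

lemma hVU : V * U = 1 := by
  ext i j
  fin_cases i <;> fin_cases j <;>
    simp [U, V, ω, ωb, Matrix.mul_apply, Fin.sum_univ_three, Matrix.one_apply] <;>
    field_simp <;>
    first
      | linear_combination -hs2
      | linear_combination 71*hs2 - 72*((s:ℂ))^2*hI2
      | linear_combination -73*hs2 + 72*((s:ℂ))^2*hI2
      | linear_combination 72*hs2 - 72*((s:ℂ))^2*hI2
      | linear_combination -72*hs2 + 72*((s:ℂ))^2*hI2
      | linear_combination 2*hs2 - 2*((s:ℂ))^2*hI2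
      | linear_combination -2*hs2 + 2*((s:ℂ))^2*hI2
      | ring

lemma hM (t : ℝ) : (-(Complex.I * (t : ℂ))) • A =
    U * (Matrix.diagonal ![0, -(Complex.I * ((s : ℂ) * t)), Complex.I * ((s : ℂ) * t)]) * V := by
  ext i j
  fin_cases i <;> fin_cases j <;>
    simp [U, V, A, ω, ωb, Matrix.mul_apply, Fin.sum_univ_three, Matrix.vecMul_diagonal] <;>
    field_simp <;>
    first
      | linear_combination ((t:ℂ))*hs2*Complex.I
      | linear_combination -((t:ℂ))*hs2*Complex.I
      | linear_combination 2*((t:ℂ))*hs2*Complex.I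
      | linear_combination -2*((t:ℂ))*hs2*Complex.I
      | linear_combination 12*Complex.I^2*((t:ℂ))*hs2
      | linear_combination -12*Complex.I^2*((t:ℂ))*hs2
      | linear_combination 48*Complex.I^2*((t:ℂ))*hs2
      | linear_combination -48*Complex.I^2*((t:ℂ))*hs2
      | linear_combination -4*Complex.I*((t:ℂ))*hs2
      | linear_combination 4*Complex.I*((t:ℂ))*hs2
      | ring

end HTW

namespace HTW2
open HTW Complex

def u : (Matrix (Fin 3) (Fin 3) ℂ)ˣ := ⟨U, V, hUV, hVU⟩

lemma hexp (t : ℝ) : NormedSpace.exp ((-(Complex.I * (t:ℂ))) • A)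
    = U * Matrix.diagonal ![1, Complex.exp (-((((s*t : ℝ)):ℂ) * Complex.I)),
        Complex.exp ((((s*t : ℝ)):ℂ) * Complex.I)] * V := by
  rw [hM t]
  have h1 : NormedSpace.exp
      (U * (Matrix.diagonal ![0, -(Complex.I * ((s:ℂ)*t)), Complex.I * ((s:ℂ)*t)]) * V) =
      U * NormedSpace.exp
        (Matrix.diagonal ![0, -(Complex.I * ((s:ℂ)*t)), Complex.I * ((s:ℂ)*t)]) * V :=
    Matrix.exp_units_conj u _
  rw [h1, Matrix.exp_diagonal]
  have hv : (NormedSpace.exp (![0, -(Complex.I * ((s:ℂ)*t)), Complex.I * ((s:ℂ)*t)] : Fin 3 → ℂ))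
      = ![1, Complex.exp (-((((s*t : ℝ)):ℂ) * Complex.I)),
          Complex.exp ((((s*t : ℝ)):ℂ) * Complex.I)] := by
    funext i
    rw [Pi.coe_exp]
    fin_cases i
    · simp
    · show NormedSpace.exp (-(Complex.I * ((s:ℂ)*t))) = _
      rw [← Complex.exp_eq_exp_ℂ]; congr 1; push_cast; ring
    · show NormedSpace.exp (Complex.I * ((s:ℂ)*t)) = _
      rw [← Complex.exp_eq_exp_ℂ]; congr 1; push_cast; ring
  rw [hv]

lemma key2 (x a : ℝ) :
    ((1 : ℂ) + Complex.exp ((a:ℂ)*Complex.I) * Complex.exp (-((x:ℂ)*Complex.I))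
      + Complex.exp (-((a:ℂ)*Complex.I)) * Complex.exp ((x:ℂ)*Complex.I)) / 3
    = (((1 + 2 * Real.cos (x - a)) / 3 : ℝ) : ℂ) := by
  push_cast
  rw [Complex.two_cos, ← Complex.exp_add, ← Complex.exp_add]
  ring_nf

end HTW2

namespace HTW3
open HTW

lemma hω : HTW.ω = Complex.exp (2*(Real.pi:ℂ)/3 * Complex.I) := by
  rw [show (2*(Real.pi:ℂ)/3) = ((2*Real.pi/3:ℝ):ℂ) by push_cast; ring,
    Complex.exp_mul_I, ← Complex.ofReal_cos, ← Complex.ofReal_sin,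
    show (2*Real.pi/3 : ℝ) = Real.pi - Real.pi/3 by ring,
    Real.cos_pi_sub, Real.sin_pi_sub, Real.cos_pi_div_three, Real.sin_pi_div_three]
  simp only [HTW.ω, HTW.s]
  push_cast
  ring

lemma hωb : HTW.ωb = Complex.exp (-(2*(Real.pi:ℂ)/3) * Complex.I) := by
  rw [show (-(2*(Real.pi:ℂ)/3)) = ((-(2*Real.pi/3):ℝ):ℂ) by push_cast; ring,
    Complex.exp_mul_I, ← Complex.ofReal_cos, ← Complex.ofReal_sin,
    Real.cos_neg, Real.sin_neg,
    show (2*Real.pi/3 : ℝ) = Real.pi - Real.pi/3 by ring,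
    Real.cos_pi_sub, Real.sin_pi_sub, Real.cos_pi_div_three, Real.sin_pi_div_three]
  simp only [HTW.ωb, HTW.s]
  push_cast
  ring

end HTW3

open HTW HTW2 HTW3

theorem hermitian_three_cycle_walk :
    (∀ t : ℝ, ∀ j : Fin 3,
      (NormedSpace.exp ((-(Complex.I * (t : ℂ))) •
          (!![0, -Complex.I, Complex.I;
              Complex.I, 0, -Complex.I;
              -Complex.I, Complex.I, 0] : Matrix (Fin 3) (Fin 3) ℂ))) j 0 =
        (((1 + 2 * Real.cos (t * Real.sqrt 3 - 2 * Real.pi * (j : ℕ) / 3)) / 3 : ℝ) : ℂ)) ∧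
    ‖((NormedSpace.exp ((-(Complex.I * ((8 * Real.pi / (3 * Real.sqrt 3) : ℝ) : ℂ))) •
          (!![0, -Complex.I, Complex.I;
              Complex.I, 0, -Complex.I;
              -Complex.I, Complex.I, 0] : Matrix (Fin 3) (Fin 3) ℂ))) 1 0)‖ = 1 := by
  have main : ∀ t : ℝ, ∀ j : Fin 3,
      (NormedSpace.exp ((-(Complex.I * (t : ℂ))) •
          (!![0, -Complex.I, Complex.I;
              Complex.I, 0, -Complex.I;
              -Complex.I, Complex.I, 0] : Matrix (Fin 3) (Fin 3) ℂ))) j 0 =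
        (((1 + 2 * Real.cos (t * Real.sqrt 3 - 2 * Real.pi * (j : ℕ) / 3)) / 3 : ℝ) : ℂ) := by
    intro t j
    show (NormedSpace.exp ((-(Complex.I * (t:ℂ))) • A)) j 0 = _
    rw [hexp t]
    fin_cases j <;>
      simp only [U, V, Matrix.mul_apply, Fin.sum_univ_three, Matrix.vecMul_diagonal] <;>
      simp [Matrix.vecHead, Matrix.vecTail] <;> simp only [show HTW.s = Real.sqrt 3 from rfl]
    · rw [Complex.two_cos]
      ring_nf
    · rw [hω, hωb, ← Complex.exp_add, ← Complex.exp_add, Complex.two_cos]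
      ring_nf
    · rw [hωb, hω, ← Complex.exp_add, ← Complex.exp_add,
        show ((t:ℂ)*((Real.sqrt 3:ℝ):ℂ) - 2*(Real.pi:ℂ)*2/3) = ((t:ℂ)*((Real.sqrt 3:ℝ):ℂ) + 2*(Real.pi:ℂ)/3) - 2*(Real.pi:ℂ) by ring,
        Complex.cos_sub_two_pi, Complex.two_cos]
      ring_nf
  refine ⟨main, ?_⟩
  rw [main, Complex.norm_real, Real.norm_eq_abs]
  have h3 : Real.sqrt 3 ≠ 0 := by positivity
  rw [show (8*Real.pi/(3*Real.sqrt 3)) * Real.sqrt 3 - 2*Real.pi*(((1:Fin 3):ℕ):ℝ)/3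
      = 2*Real.pi by field_simp; norm_num [Fin.val_one], Real.cos_two_pi]
  norm_num
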